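/- arXiv:1912.12728 — 6 statements merged into one kernel-verified Lean document; each statement's English description precedes it below -/
import Mathlib

section
/- For every integer M ≥ 2, the Adams-Moulton coefficients satisfy β₁ > β₀, i.e., (1/(M-1)!)·∫₀¹ (1-u)·∏_{i=1}^{M-1}(u+i) du > (1/M!)·∫₀¹ ∏_{i=0}^{M-1}(u+i) du. -/
open Finset intervalIntegral

private lemma am_tel (n : ℕ) : ∏ i ∈ Finset.Icc 1 n, ((i : ℝ) + 1) / i = n + 1 := by
  induction n with
  | zero => simp
  | succ n ih =>
    rw [Finset.prod_Icc_succ_top (by omega), ih]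
    have h : (0:ℝ) < n + 1 := by positivity
    push_cast
    field_simp

private lemma am_key (n : ℕ) {u : ℝ} (hu0 : 0 ≤ u) (hu1 : u ≤ 1) :
    ∏ i ∈ Finset.Icc 1 n, ((1 - u) + (i : ℝ)) ≤
      (n + 1) * ∏ i ∈ Finset.Icc 1 n, (u + (i : ℝ)) := by
  have h1 : ∏ i ∈ Finset.Icc 1 n, ((1 - u) + (i : ℝ)) ≤
      ∏ i ∈ Finset.Icc 1 n, (((i : ℝ) + 1) / i * (u + i)) := by
    apply Finset.prod_le_prod
    · intro i hi
      have hi1 : 1 ≤ i := (Finset.mem_Icc.mp hi).1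
      have : (1:ℝ) ≤ i := by exact_mod_cast hi1
      linarith
    · intro i hi
      have hi1 : 1 ≤ i := (Finset.mem_Icc.mp hi).1
      have hi' : (1:ℝ) ≤ i := by exact_mod_cast hi1
      rw [div_mul_eq_mul_div, le_div_iff₀ (by linarith)]
      nlinarith
  calc ∏ i ∈ Finset.Icc 1 n, ((1 - u) + (i : ℝ))
      ≤ ∏ i ∈ Finset.Icc 1 n, (((i : ℝ) + 1) / i * (u + i)) := h1
    _ = (∏ i ∈ Finset.Icc 1 n, ((i : ℝ) + 1) / i) *
          ∏ i ∈ Finset.Icc 1 n, (u + (i : ℝ)) := Finset.prod_mul_distrib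
    _ = (n + 1) * ∏ i ∈ Finset.Icc 1 n, (u + (i : ℝ)) := by rw [am_tel]

private lemma am_Qpos (n : ℕ) {u : ℝ} (hu0 : 0 ≤ u) :
    0 < ∏ i ∈ Finset.Icc 1 n, (u + (i : ℝ)) := by
  apply Finset.prod_pos
  intro i hi
  have hi1 : 1 ≤ i := (Finset.mem_Icc.mp hi).1
  have : (1:ℝ) ≤ i := by exact_mod_cast hi1
  linarith

private lemma am_Qcont (n : ℕ) : Continuous fun u : ℝ => ∏ i ∈ Finset.Icc 1 n, (u + (i : ℝ)) :=
  continuous_finset_prod _ fun i _ => by continuity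

/-- For every integer `M ≥ 2`, the Adams-Moulton coefficients satisfy `β₁ > β₀`:
`(1/(M-1)!) ∫₀¹ (1-u) ∏_{i=1}^{M-1} (u+i) du > (1/M!) ∫₀¹ ∏_{i=0}^{M-1} (u+i) du`. -/
theorem am_beta1_gt_beta0 (M : ℕ) (hM : 2 ≤ M) :
    (1 / (Nat.factorial (M - 1) : ℝ)) *
      ∫ u in (0:ℝ)..1, (1 - u) * ∏ i ∈ Finset.Icc 1 (M - 1), (u + (i : ℝ)) >
    (1 / (Nat.factorial M : ℝ)) *
      ∫ u in (0:ℝ)..1, ∏ i ∈ Finset.range M, (u + (i : ℝ)) := by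
  obtain ⟨n, rfl⟩ : ∃ n, M = n + 1 := ⟨M - 1, by omega⟩
  have hn : 1 ≤ n := by omega
  simp only [Nat.add_sub_cancel]
  set Q : ℝ → ℝ := fun u => ∏ i ∈ Finset.Icc 1 n, (u + (i : ℝ)) with hQ
  have hQc : Continuous Q := am_Qcont n
  -- rewrite the range product
  have hsplit : ∀ u : ℝ, ∏ i ∈ Finset.range (n + 1), (u + (i : ℝ)) = u * Q u := by
    intro u
    rw [Finset.range_eq_Ico, Finset.prod_eq_prod_Ico_succ_bot (by omega),
      Finset.Ico_add_one_right_eq_Icc]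
    simp [hQ]
  have hBrw : (∫ u in (0:ℝ)..1, ∏ i ∈ Finset.range (n + 1), (u + (i : ℝ)))
      = ∫ u in (0:ℝ)..1, u * Q u := by
    congr 1; ext u; exact hsplit u
  -- reflection: ∫ u Q u = ∫ (1-u) Q (1-u)
  have hrefl : (∫ u in (0:ℝ)..1, u * Q u)
      = ∫ u in (0:ℝ)..1, (1 - u) * Q (1 - u) := by
    have := intervalIntegral.integral_comp_sub_left (a := (0:ℝ)) (b := 1)
      (fun x => x * Q x) 1
    simp only [sub_zero, sub_self] at this
    exact this.symm
  -- strict integral inequality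
  have hlt : (∫ u in (0:ℝ)..1, (1 - u) * Q (1 - u))
      < ∫ u in (0:ℝ)..1, ((n : ℝ) + 1) * ((1 - u) * Q u) := by
    apply intervalIntegral.integral_lt_integral_of_continuousOn_of_le_of_exists_lt
      one_pos
    · exact (((continuous_const.sub continuous_id).mul
        (hQc.comp (continuous_const.sub continuous_id)))).continuousOn
    · exact (continuous_const.mul
        ((continuous_const.sub continuous_id).mul hQc)).continuousOn
    · intro u hu
      have hu0 : 0 ≤ u := le_of_lt hu.1
      have hu1 : u ≤ 1 := hu.2
      have hkey : Q (1 - u) ≤ ((n : ℝ) + 1) * Q u := by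
        have := am_key n hu0 hu1
        simpa [hQ] using this
      have h1u : 0 ≤ 1 - u := by linarith
      calc (1 - u) * Q (1 - u) ≤ (1 - u) * (((n : ℝ) + 1) * Q u) :=
            mul_le_mul_of_nonneg_left hkey h1u
        _ = ((n : ℝ) + 1) * ((1 - u) * Q u) := by ring
    · refine ⟨1/2, by norm_num, ?_⟩
      have hQpos : 0 < Q (1/2 : ℝ) := am_Qpos n (by norm_num)
      have h12 : (1:ℝ) - 1/2 = 1/2 := by norm_num
      rw [h12]
      have hn1 : (2:ℝ) ≤ (n : ℝ) + 1 := by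
        have : (1:ℝ) ≤ n := by exact_mod_cast hn
        linarith
      nlinarith
  rw [hBrw, hrefl]
  rw [intervalIntegral.integral_const_mul] at hlt
  have hfacpos : (0:ℝ) < Nat.factorial n := by positivity
  have hfac : ((Nat.factorial (n + 1) : ℝ)) = ((n : ℝ) + 1) * Nat.factorial n := by
    rw [Nat.factorial_succ]; push_cast; ring
  rw [hfac]
  rw [gt_iff_lt, div_mul_eq_mul_div, div_mul_eq_mul_div, div_lt_div_iff₀ (by positivity) hfacpos]
  calc (1 * ∫ u in (0:ℝ)..1, (1 - u) * Q (1 - u)) * Nat.factorial n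
      < (((n : ℝ) + 1) * ∫ u in (0:ℝ)..1, (1 - u) * Q u) * Nat.factorial n := by
        have := mul_lt_mul_of_pos_right hlt hfacpos
        simpa using this
    _ = (1 * ∫ u in (0:ℝ)..1, (1 - u) * Q u) * (((n : ℝ) + 1) * Nat.factorial n) := by ring
end

section
/- For every integer M ≥ 2, the inequality (M/(M+1))·∫₀¹ ∏_{i=1}^{M-1}(u+i) du > ∫₀¹ ∏_{i=0}^{M-1}(u+i) du holds. -/
open Finset intervalIntegral

lemma tele_prod (n : ℕ) : ∏ i ∈ Finset.Icc 1 n, (((i : ℝ) + 1) / i) = n + 1 := by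
  induction n with
  | zero => simp
  | succ n ih =>
    rw [Finset.prod_Icc_succ_top (by omega : 1 ≤ n + 1), ih]
    have : ((n : ℝ) + 1) ≠ 0 := by positivity
    push_cast
    field_simp

lemma key_prod (M : ℕ) (hM : 2 ≤ M) (v : ℝ) (hv : v ∈ Set.Ioo (0:ℝ) 1) :
    ∏ i ∈ Finset.Icc 1 (M - 1), (1 - v + (i : ℝ)) <
      (M : ℝ) * ∏ i ∈ Finset.Icc 1 (M - 1), (v + (i : ℝ)) := by
  obtain ⟨hv0, hv1⟩ := hv
  have hM1 : (M : ℝ) = ∏ i ∈ Finset.Icc 1 (M - 1), (((i : ℝ) + 1) / i) := by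
    rw [tele_prod]
    have : (M - 1 : ℕ) + 1 = M := by omega
    rw [show ((M - 1 : ℕ) : ℝ) + 1 = ((M : ℕ) : ℝ) by exact_mod_cast congrArg Nat.cast this]
  rw [hM1, ← Finset.prod_mul_distrib]
  apply Finset.prod_lt_prod_of_nonempty
  · intro i hi
    have hi1 : 1 ≤ i := (Finset.mem_Icc.mp hi).1
    have : (1 : ℝ) ≤ i := by exact_mod_cast hi1
    nlinarith
  · intro i hi
    have hi1 : 1 ≤ i := (Finset.mem_Icc.mp hi).1
    have hi' : (1 : ℝ) ≤ i := by exact_mod_cast hi1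
    have hipos : (0 : ℝ) < i := by linarith
    rw [div_mul_eq_mul_div, lt_div_iff₀ hipos]
    nlinarith
  · refine ⟨1, Finset.mem_Icc.mpr ⟨le_refl 1, by omega⟩⟩

/-- For every integer `M ≥ 2`,
`(M/(M+1)) ∫₀¹ ∏_{i=1}^{M-1} (u+i) du > ∫₀¹ ∏_{i=0}^{M-1} (u+i) du`. -/
theorem am_inductive_ineq (M : ℕ) (hM : 2 ≤ M) :
    ((M : ℝ) / ((M : ℝ) + 1)) *
      ∫ u in (0:ℝ)..1, ∏ i ∈ Finset.Icc 1 (M - 1), (u + (i : ℝ)) >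
    ∫ u in (0:ℝ)..1, ∏ i ∈ Finset.range M, (u + (i : ℝ)) := by
  set P : ℝ → ℝ := fun u => ∏ i ∈ Finset.Icc 1 (M - 1), (u + (i : ℝ)) with hP
  have hPcont : Continuous P := by
    apply continuous_finset_prod
    intro i _
    continuity
  -- rewrite range product
  have hsplit : ∀ u : ℝ, ∏ i ∈ Finset.range M, (u + (i : ℝ)) = u * P u := by
    intro u
    have h2 : Finset.Ico 1 M = Finset.Icc 1 (M - 1) := by
      rw [← Finset.Ico_add_one_right_eq_Icc]; congr 1; omega
    rw [Finset.range_eq_Ico, Finset.prod_eq_prod_Ico_succ_bot (by omega : 0 < M), h2]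
    simp [hP]
  simp only [hsplit]
  set A : ℝ := ∫ u in (0:ℝ)..1, P u with hA
  set B : ℝ := ∫ u in (0:ℝ)..1, u * P u with hB
  have hint1 : IntervalIntegrable (fun u => u * P u) MeasureTheory.volume 0 1 :=
    (continuous_id.mul hPcont).intervalIntegrable 0 1
  have hintP : IntervalIntegrable P MeasureTheory.volume 0 1 :=
    hPcont.intervalIntegrable 0 1
  -- reflection
  have key1 : (∫ u in (0:ℝ)..1, (1 - u) * P (1 - u)) = B := by
    have := intervalIntegral.integral_comp_sub_left (a := (0:ℝ)) (b := 1)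
      (fun x => x * P x) 1
    simpa using this
  have hQcont : Continuous (fun v : ℝ => P (1 - v)) :=
    hPcont.comp (continuous_const.sub continuous_id)
  have hgcont : Continuous (fun v : ℝ => (M : ℝ) * ((1 - v) * P v) - (1 - v) * P (1 - v)) :=
    (continuous_const.mul ((continuous_const.sub continuous_id).mul hPcont)).sub
      ((continuous_const.sub continuous_id).mul hQcont)
  have key2 : 0 < ∫ v in (0:ℝ)..1, ((M : ℝ) * ((1 - v) * P v) - (1 - v) * P (1 - v)) := by
    apply intervalIntegral.intervalIntegral_pos_of_pos_on
      (hgcont.intervalIntegrable 0 1)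
    · intro v hv
      have hkey := key_prod M hM v hv
      have h1v : 0 < 1 - v := by linarith [hv.2]
      have : (1 - v) * P (1 - v) < (M : ℝ) * ((1 - v) * P v) := by
        have := mul_lt_mul_of_pos_left hkey h1v
        calc (1 - v) * P (1 - v) < (1 - v) * ((M : ℝ) * P v) := this
          _ = (M : ℝ) * ((1 - v) * P v) := by ring
      linarith
    · norm_num
  -- compute the integral in key2
  have hcomp : (∫ v in (0:ℝ)..1, ((M : ℝ) * ((1 - v) * P v) - (1 - v) * P (1 - v)))
      = (M : ℝ) * (A - B) - B := by
    have hi2 : IntervalIntegrable (fun v => (M : ℝ) * ((1 - v) * P v))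
        MeasureTheory.volume 0 1 :=
      (continuous_const.mul ((continuous_const.sub continuous_id).mul hPcont)).intervalIntegrable 0 1
    have hi3 : IntervalIntegrable (fun v => (1 - v) * P (1 - v))
        MeasureTheory.volume 0 1 :=
      ((continuous_const.sub continuous_id).mul hQcont).intervalIntegrable 0 1
    rw [intervalIntegral.integral_sub hi2 hi3, key1]
    congr 1
    rw [intervalIntegral.integral_const_mul]
    congr 1
    have : (∫ v in (0:ℝ)..1, (1 - v) * P v) = ∫ v in (0:ℝ)..1, (P v - v * P v) := by
      congr 1; ext v; ring
    rw [this, intervalIntegral.integral_sub hintP hint1]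
  rw [hcomp] at key2
  have hMpos : (0 : ℝ) < (M : ℝ) + 1 := by positivity
  rw [gt_iff_lt, div_mul_eq_mul_div, lt_div_iff₀ hMpos]
  nlinarith [key2]
end

section
/- For the M-step Adams-Moulton method with M ≥ 2, the signs of consecutive coefficients alternate for indices m ≥ 1: sign(β_{m+1}) = -sign(β_m) for 1 ≤ m ≤ M-1. -/
open Finset intervalIntegral

lemma am_integrand_neg (M m : ℕ) (hm : 1 ≤ m) (u : ℝ) (hu : u ∈ Set.Ioo (0:ℝ) 1) :
    ∏ i ∈ (Finset.range (M + 1)).erase m, (u + (i : ℝ) - 1) < 0 := by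
  have h0 : (0 : ℕ) ∈ (Finset.range (M + 1)).erase m := by
    simp [Finset.mem_erase]
    omega
  rw [← Finset.mul_prod_erase _ _ h0]
  have hpos : 0 < ∏ i ∈ ((Finset.range (M + 1)).erase m).erase 0, (u + (i : ℝ) - 1) := by
    apply Finset.prod_pos
    intro i hi
    have hi1 : 1 ≤ i := by
      have := Finset.mem_erase.mp hi
      omega
    have : (1 : ℝ) ≤ (i : ℝ) := by exact_mod_cast hi1
    linarith [hu.1]
  have hneg : u + (0 : ℕ) - 1 < 0 := by
    push_cast
    linarith [hu.2]
  exact mul_neg_of_neg_of_pos hneg hpos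

lemma am_integral_neg (M m : ℕ) (hm : 1 ≤ m) :
    (∫ u in (0:ℝ)..1, ∏ i ∈ (Finset.range (M + 1)).erase m, (u + (i : ℝ) - 1)) < 0 := by
  have hcont : Continuous fun u : ℝ => ∏ i ∈ (Finset.range (M + 1)).erase m, (u + (i : ℝ) - 1) := by
    apply continuous_finset_prod
    intro i _
    continuity
  have := intervalIntegral.intervalIntegral_pos_of_pos_on (f := fun u : ℝ =>
      -∏ i ∈ (Finset.range (M + 1)).erase m, (u + (i : ℝ) - 1)) (a := 0) (b := 1)
      (hcont.neg.intervalIntegrable 0 1)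
      (fun x hx => by simpa using am_integrand_neg M m hm x hx) one_pos
  rw [intervalIntegral.integral_neg] at this
  linarith

/-- For the M-step Adams-Moulton method with `M ≥ 2`, where
`β m = ((-1)^m / (m! (M-m)!)) ∫₀¹ ∏_{i=0, i≠m}^M (u+i-1) du`,
the signs of consecutive coefficients alternate for `m ≥ 1`: precisely,
`β 1 > 0` and `(-1)^m * β m < 0` for all `2 ≤ m ≤ M`
(so `sign (β (m+1)) = - sign (β m)` for `1 ≤ m ≤ M-1`). -/
theorem am_sign_alternation (M : ℕ) (hM : 2 ≤ M) (β : ℕ → ℝ)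
    (hβ : ∀ m ≤ M, β m = ((-1 : ℝ) ^ m / (Nat.factorial m * Nat.factorial (M - m))) *
      ∫ u in (0:ℝ)..1, ∏ i ∈ (Finset.range (M + 1)).erase m, (u + (i : ℝ) - 1)) :
    0 < β 1 ∧ (∀ m, 2 ≤ m → m ≤ M → (-1 : ℝ) ^ m * β m < 0) ∧
      ∀ m, 1 ≤ m → m ≤ M - 1 → Real.sign (β (m + 1)) = - Real.sign (β m) := by
  have hF : ∀ m : ℕ, (0 : ℝ) < (Nat.factorial m * Nat.factorial (M - m) : ℝ) := by
    intro m
    positivity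
  have hβsign : ∀ m, 1 ≤ m → m ≤ M → (Odd m → 0 < β m) ∧ (Even m → β m < 0) := by
    intro m hm1 hmM
    have hI := am_integral_neg M m hm1
    rw [hβ m hmM]
    constructor
    · intro hodd
      rw [hodd.neg_one_pow]
      have : (0:ℝ) < (-1) / ((Nat.factorial m : ℝ) * (Nat.factorial (M - m) : ℝ)) *
          (∫ u in (0:ℝ)..1, ∏ i ∈ (Finset.range (M + 1)).erase m, (u + (i : ℝ) - 1)) := by
        apply mul_pos_of_neg_of_neg _ hI
        apply div_neg_of_neg_of_pos (by norm_num) (hF m)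
      exact_mod_cast this
    · intro heven
      rw [heven.neg_one_pow]
      have : (1:ℝ) / ((Nat.factorial m : ℝ) * (Nat.factorial (M - m) : ℝ)) *
          (∫ u in (0:ℝ)..1, ∏ i ∈ (Finset.range (M + 1)).erase m, (u + (i : ℝ) - 1)) < 0 := by
        apply mul_neg_of_pos_of_neg _ hI
        positivity
      exact_mod_cast this
  refine ⟨(hβsign 1 le_rfl (by omega)).1 odd_one, ?_, ?_⟩
  · intro m hm2 hmM
    rcases Nat.even_or_odd m with he | ho
    · have := (hβsign m (by omega) hmM).2 he
      rw [he.neg_one_pow]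
      linarith
    · have := (hβsign m (by omega) hmM).1 ho
      rw [ho.neg_one_pow]
      linarith
  · intro m hm1 hmM
    have hmM' : m ≤ M := by omega
    have hm1M : m + 1 ≤ M := by omega
    rcases Nat.even_or_odd m with he | ho
    · have h1 := (hβsign m (by omega) hmM').2 he
      have h2 := (hβsign (m + 1) (by omega) hm1M).1 (Even.add_one he)
      rw [Real.sign_of_pos h2, Real.sign_of_neg h1]
      norm_num
    · have h1 := (hβsign m (by omega) hmM').1 ho
      have h2 := (hβsign (m + 1) (by omega) hm1M).2 (Odd.add_one ho)
      rw [Real.sign_of_neg h2, Real.sign_of_pos h1]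
end

section
/- For every integer M ≥ 2, the second characteristic polynomial σ(r) = Σ_{m=0}^{M} β_m r^{M-m} of the M-step Adams-Moulton method has a real root in the open interval (-∞, -β₁/β₀), and in particular a root of absolute value strictly greater than 1. -/
open Finset intervalIntegral

private lemma am_prod_comp_lt (M : ℕ) (hM : 2 ≤ M) (u : ℝ) (hu0 : 0 < u) (hu1 : u < 1) :
    ∏ i ∈ Finset.Icc 2 M, ((i : ℝ) - u) < M * ∏ i ∈ Finset.Icc 2 M, (u + (i : ℝ) - 1) := by
  induction M, hM using Nat.le_induction with
  | base =>
      simp only [Finset.Icc_self, Finset.prod_singleton]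
      push_cast
      nlinarith
  | succ n hn ih =>
      rw [Finset.prod_Icc_succ_top (by omega), Finset.prod_Icc_succ_top (by omega)]
      have hQ : 0 < ∏ i ∈ Finset.Icc 2 n, (u + (i : ℝ) - 1) :=
        Finset.prod_pos fun i hi => by
          have h2 : 2 ≤ i := (Finset.mem_Icc.mp hi).1
          have : (2 : ℝ) ≤ (i : ℝ) := by exact_mod_cast h2
          linarith
      have hP : 0 ≤ ∏ i ∈ Finset.Icc 2 n, ((i : ℝ) - u) :=
        le_of_lt (Finset.prod_pos fun i hi => by
          have h2 : 2 ≤ i := (Finset.mem_Icc.mp hi).1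
          have : (2 : ℝ) ≤ (i : ℝ) := by exact_mod_cast h2
          linarith)
      have hn1 : (1 : ℝ) ≤ (n : ℝ) := by exact_mod_cast Nat.one_le_of_lt hn
      push_cast
      nlinarith [ih]

set_option maxHeartbeats 1000000 in
/-- For every `M ≥ 2`, the second characteristic polynomial
`σ(r) = Σ_{m=0}^M β m * r^(M-m)` of the M-step Adams-Moulton method (with
`β m = ((-1)^m / (m! (M-m)!)) ∫₀¹ ∏_{i=0, i≠m}^M (u+i-1) du`) has a real root
`r < -β₁/β₀`, and in particular a root of absolute value strictly greater than 1. -/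
theorem am_sigma_has_large_root (M : ℕ) (hM : 2 ≤ M) (β : ℕ → ℝ)
    (hβ : ∀ m ≤ M, β m = ((-1 : ℝ) ^ m / (Nat.factorial m * Nat.factorial (M - m))) *
      ∫ u in (0:ℝ)..1, ∏ i ∈ (Finset.range (M + 1)).erase m, (u + (i : ℝ) - 1)) :
    ∃ r : ℝ, (∑ m ∈ Finset.range (M + 1), β m * r ^ (M - m)) = 0 ∧
      r < -(β 1 / β 0) ∧ 1 < |r| := by
  set f : ℕ → ℝ → ℝ := fun m u => ∏ i ∈ (Finset.range (M + 1)).erase m, (u + (i : ℝ) - 1)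
    with hf
  have hcont : ∀ m, Continuous (f m) := fun m =>
    continuous_finset_prod _ (fun i _ => by continuity)
  have hint : ∀ m, IntervalIntegrable (f m) MeasureTheory.volume 0 1 := fun m =>
    (hcont m).intervalIntegrable 0 1
  -- I 0 > 0
  have hI0 : 0 < ∫ u in (0:ℝ)..1, f 0 u := by
    apply intervalIntegral_pos_of_pos_on (hint 0) _ one_pos
    intro u hu
    apply Finset.prod_pos
    intro i hi
    have hi1 : 1 ≤ i := Nat.one_le_iff_ne_zero.mpr (Finset.ne_of_mem_erase hi)
    have : (1 : ℝ) ≤ (i : ℝ) := by exact_mod_cast hi1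
    have := hu.1
    linarith
  -- I m < 0 for 1 ≤ m ≤ M
  have hIm : ∀ m, 1 ≤ m → m ≤ M → (∫ u in (0:ℝ)..1, f m u) < 0 := by
    intro m h1 h2
    have h0mem : (0 : ℕ) ∈ (Finset.range (M + 1)).erase m := by
      simp only [Finset.mem_erase, Finset.mem_range]; omega
    have key : ∀ u ∈ Set.Ioo (0:ℝ) 1, 0 < -(f m u) := by
      intro u hu
      have hrw := Finset.mul_prod_erase ((Finset.range (M + 1)).erase m) (fun i : ℕ => (u + (i : ℝ) - 1)) h0mem
      have hpos : 0 < ∏ i ∈ ((Finset.range (M + 1)).erase m).erase 0, (u + (i : ℝ) - 1) := by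
        apply Finset.prod_pos
        intro i hi
        have hi1 : 1 ≤ i := Nat.one_le_iff_ne_zero.mpr (Finset.ne_of_mem_erase hi)
        have : (1 : ℝ) ≤ (i : ℝ) := by exact_mod_cast hi1
        have := hu.1
        linarith
      have hneg : u + (0 : ℝ) - 1 < 0 := by
        have := hu.2; push_cast; linarith
      have : f m u = (u + (0:ℕ) - 1) * ∏ i ∈ ((Finset.range (M + 1)).erase m).erase 0,
          (u + (i : ℝ) - 1) := (hrw).symm
      rw [this]
      push_cast at hneg ⊢
      nlinarith
    have := intervalIntegral_pos_of_pos_on ((hint m).neg) key one_pos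
    simp only [Pi.neg_apply] at this
    rw [intervalIntegral.integral_neg] at this
    linarith
  have hb0 : 0 < β 0 := by
    rw [hβ 0 (Nat.zero_le M)]
    have hD : (0:ℝ) < ((Nat.factorial 0 : ℝ) * (Nat.factorial (M - 0) : ℝ)) := by positivity
    apply mul_pos _ hI0
    simp only [pow_zero]
    positivity
  have hc : ∀ m, 1 ≤ m → m ≤ M → (-1 : ℝ) ^ m * β m < 0 := by
    intro m h1 h2
    have hsq : (-1 : ℝ) ^ m * (-1 : ℝ) ^ m = 1 := by
      rw [← pow_add]; exact Even.neg_one_pow ⟨m, rfl⟩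
    rw [hβ m h2, ← mul_assoc, mul_div_assoc', hsq]
    apply mul_neg_of_pos_of_neg
    · positivity
    · exact hIm m h1 h2
  -- P and decompositions of f 0, f 1
  set P : ℝ → ℝ := fun u => ∏ i ∈ Finset.Icc 2 M, (u + (i : ℝ) - 1) with hP
  have hPcont : Continuous P := continuous_finset_prod _ (fun i _ => by continuity)
  have hf0 : ∀ u : ℝ, f 0 u = u * P u := by
    intro u
    have hset : (Finset.range (M + 1)).erase 0 = Finset.Icc 1 M := by
      ext x; simp only [Finset.mem_erase, Finset.mem_range, Finset.mem_Icc]; omega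
    have h1mem : (1 : ℕ) ∈ Finset.Icc 1 M := by simp only [Finset.mem_Icc]; omega
    have herase : (Finset.Icc 1 M).erase 1 = Finset.Icc 2 M := by
      ext x; simp only [Finset.mem_erase, Finset.mem_Icc]; omega
    have := (Finset.mul_prod_erase (Finset.Icc 1 M) (fun i : ℕ => (u + (i : ℝ) - 1)) h1mem).symm
    simp only [hf, hset, herase] at this ⊢
    rw [this]
    push_cast
    ring
  have hf1 : ∀ u : ℝ, f 1 u = (u - 1) * P u := by
    intro u
    have h0mem : (0 : ℕ) ∈ (Finset.range (M + 1)).erase 1 := by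
      simp only [Finset.mem_erase, Finset.mem_range]; omega
    have herase : ((Finset.range (M + 1)).erase 1).erase 0 = Finset.Icc 2 M := by
      ext x; simp only [Finset.mem_erase, Finset.mem_range, Finset.mem_Icc]; omega
    have := (Finset.mul_prod_erase ((Finset.range (M + 1)).erase 1)
      (fun i : ℕ => (u + (i : ℝ) - 1)) h0mem).symm
    simp only [hf, herase] at this ⊢
    rw [this]
    push_cast
    ring
  have hPpos : ∀ u : ℝ, 0 < u → 0 < P u := by
    intro u hu
    apply Finset.prod_pos
    intro i hi
    have h2 : 2 ≤ i := (Finset.mem_Icc.mp hi).1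
    have : (2 : ℝ) ≤ (i : ℝ) := by exact_mod_cast h2
    linarith
  -- substitution: ∫ u P u = ∫ (1-u) P (1-u)
  have hsub : (∫ u in (0:ℝ)..1, u * P u) = ∫ u in (0:ℝ)..1, (1 - u) * P (1 - u) := by
    have := intervalIntegral.integral_comp_sub_left (fun x => x * P x) 1 (a := 0) (b := 1)
    norm_num at this
    exact this.symm
  -- key strict inequality
  have hc1 : Continuous fun u : ℝ => (1 - u) * P u :=
    (continuous_const.sub continuous_id).mul hPcont
  have hc2 : Continuous fun u : ℝ => (1 - u) * P (1 - u) :=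
    (continuous_const.sub continuous_id).mul (hPcont.comp (continuous_const.sub continuous_id))
  have hkey : (∫ u in (0:ℝ)..1, u * P u) < M * ∫ u in (0:ℝ)..1, (1 - u) * P u := by
    have hpos : 0 < ∫ u in (0:ℝ)..1, ((M : ℝ) * ((1 - u) * P u) - (1 - u) * P (1 - u)) := by
      apply intervalIntegral_pos_of_pos_on _ _ one_pos
      · exact ((continuous_const.mul hc1).sub hc2).intervalIntegrable 0 1
      · intro u hu
        obtain ⟨hu0, hu1⟩ := hu
        have hlt : P (1 - u) < M * P u := by
          have h1 := am_prod_comp_lt M hM u hu0 hu1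
          have : P (1 - u) = ∏ i ∈ Finset.Icc 2 M, ((i : ℝ) - u) := by
            apply Finset.prod_congr rfl
            intro i _
            ring
          rw [this]
          exact h1
        have hPu : 0 < P u := hPpos u hu0
        nlinarith
    have hsplit : (∫ u in (0:ℝ)..1, ((M : ℝ) * ((1 - u) * P u) - (1 - u) * P (1 - u)))
        = (M : ℝ) * (∫ u in (0:ℝ)..1, (1 - u) * P u) - ∫ u in (0:ℝ)..1, (1 - u) * P (1 - u) := by
      rw [intervalIntegral.integral_sub (f := fun u : ℝ => (M : ℝ) * ((1 - u) * P u)) (g := fun u : ℝ => (1 - u) * P (1 - u)) ((continuous_const.mul hc1).intervalIntegrable 0 1)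
        (hc2.intervalIntegrable 0 1), intervalIntegral.integral_const_mul]
    rw [hsplit] at hpos
    rw [hsub]
    linarith
  -- β 0, β 1 in terms of the integrals
  have hMfac : (0:ℝ) < (Nat.factorial M : ℝ) := by positivity
  have hM1fac : (0:ℝ) < (Nat.factorial (M-1) : ℝ) := by positivity
  have hb0eq : β 0 = (∫ u in (0:ℝ)..1, u * P u) / (Nat.factorial M : ℝ) := by
    rw [hβ 0 (Nat.zero_le M)]
    have : (∫ u in (0:ℝ)..1, f 0 u) = ∫ u in (0:ℝ)..1, u * P u := by
      apply intervalIntegral.integral_congr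
      intro u _
      exact hf0 u
    rw [← this]
    simp [hf]
    ring
  have hb1eq : β 1 = (∫ u in (0:ℝ)..1, (1 - u) * P u) / (Nat.factorial (M - 1) : ℝ) := by
    rw [hβ 1 (by omega)]
    have h1 : (∫ u in (0:ℝ)..1, f 1 u) = ∫ u in (0:ℝ)..1, (u - 1) * P u := by
      apply intervalIntegral.integral_congr
      intro u _
      exact hf1 u
    have h2 : (∫ u in (0:ℝ)..1, (u - 1) * P u) = - ∫ u in (0:ℝ)..1, (1 - u) * P u := by
      rw [← intervalIntegral.integral_neg]
      apply intervalIntegral.integral_congr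
      intro u _
      ring
    simp only [hf] at h1
    rw [h1, h2]
    simp
    ring
  have hb01 : β 0 < β 1 := by
    rw [hb0eq, hb1eq]
    rw [div_lt_div_iff₀ hMfac hM1fac]
    have hfacM : (Nat.factorial M : ℝ) = M * (Nat.factorial (M - 1) : ℝ) := by
      exact_mod_cast (Nat.mul_factorial_pred (by omega)).symm
    rw [hfacM]
    have := hPpos
    nlinarith [hkey, hM1fac]
  -- IVT setup
  set s := β 1 / β 0 with hs
  have hs1 : 1 < s := (one_lt_div hb0).mpr hb01
  have hspos : 0 < s := lt_trans one_pos hs1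
  set c : ℕ → ℝ := fun m => (-1 : ℝ) ^ m * β m with hcdef
  set h : ℝ → ℝ := fun t => ∑ m ∈ Finset.range (M + 1), c m * t ^ (M - m) with hh
  have hhcont : Continuous h :=
    continuous_finset_sum _ (fun m _ => continuous_const.mul (continuous_pow (M - m)))
  have hc0 : c 0 = β 0 := by simp [hcdef]
  have hc1v : c 1 = -β 1 := by simp [hcdef]
  have hsplit0 : ∀ t : ℝ, h t = c 0 * t ^ M + ∑ m ∈ Finset.Icc 1 M, c m * t ^ (M - m) := by
    intro t
    have hU : Finset.range (M + 1) = insert 0 (Finset.Icc 1 M) := by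
      ext x; simp only [Finset.mem_insert, Finset.mem_Icc, Finset.mem_range]; omega
    rw [hh]
    simp only
    rw [hU, Finset.sum_insert (by simp)]
    simp only [Nat.sub_zero]
  have hsplit1 : ∀ t : ℝ, h t = c 0 * t ^ M + c 1 * t ^ (M - 1)
      + ∑ m ∈ Finset.Icc 2 M, c m * t ^ (M - m) := by
    intro t
    rw [hsplit0 t]
    have hU : Finset.Icc 1 M = insert 1 (Finset.Icc 2 M) := by
      ext x; simp only [Finset.mem_insert, Finset.mem_Icc]; omega
    rw [hU, Finset.sum_insert (by simp)]
    ring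
  have hb0ne : β 0 ≠ 0 := ne_of_gt hb0
  have hβ0s : β 0 * s = β 1 := by rw [hs]; field_simp
  have hhs : h s < 0 := by
    rw [hsplit1 s]
    have hpowM : s ^ M = s ^ (M - 1) * s := by rw [← pow_succ]; congr 1; omega
    have hlead : c 0 * s ^ M + c 1 * s ^ (M - 1) = 0 := by
      rw [hc0, hc1v, hpowM, ← hβ0s]; ring
    have htail : (∑ m ∈ Finset.Icc 2 M, c m * s ^ (M - m)) < 0 := by
      apply Finset.sum_neg
      · intro m hm
        obtain ⟨hm1, hm2⟩ := Finset.mem_Icc.mp hm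
        exact mul_neg_of_neg_of_pos (hc m (by omega) hm2) (pow_pos hspos _)
      · exact Finset.nonempty_Icc.mpr hM
    linarith
  -- large R gives h R > 0
  set Sg : ℝ := ∑ m ∈ Finset.Icc 1 M, |c m| with hSg
  have hSgnonneg : 0 ≤ Sg := Finset.sum_nonneg fun m _ => abs_nonneg _
  set R : ℝ := max s ((Sg + β 0) / β 0 + 1) with hR
  have hRs : s ≤ R := le_max_left _ _
  have hR1 : 1 < R := lt_of_lt_of_le hs1 hRs
  have hRpos : 0 < R := lt_trans one_pos hR1
  have hRT : Sg < β 0 * R := by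
    have h1 : (Sg + β 0) / β 0 + 1 ≤ R := le_max_right _ _
    have h2 : β 0 * ((Sg + β 0) / β 0 + 1) = Sg + β 0 + β 0 := by field_simp
    have h3 := mul_le_mul_of_nonneg_left h1 hb0.le
    rw [h2] at h3
    linarith
  have hhR : 0 < h R := by
    rw [hsplit0 R]
    have htail : -(Sg * R ^ (M - 1)) ≤ ∑ m ∈ Finset.Icc 1 M, c m * R ^ (M - m) := by
      have : ∀ m ∈ Finset.Icc 1 M, -(|c m| * R ^ (M - 1)) ≤ c m * R ^ (M - m) := by
        intro m hm
        obtain ⟨hm1, hm2⟩ := Finset.mem_Icc.mp hm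
        have hp1 : R ^ (M - m) ≤ R ^ (M - 1) :=
          pow_le_pow_right₀ hR1.le (by omega)
        have hp2 : -|c m| * R ^ (M - m) ≤ c m * R ^ (M - m) :=
          mul_le_mul_of_nonneg_right (neg_abs_le _) (pow_nonneg hRpos.le _)
        have hp3 : |c m| * R ^ (M - m) ≤ |c m| * R ^ (M - 1) :=
          mul_le_mul_of_nonneg_left hp1 (abs_nonneg _)
        linarith
      calc -(Sg * R ^ (M - 1)) = ∑ m ∈ Finset.Icc 1 M, -(|c m| * R ^ (M - 1)) := by
            rw [Finset.sum_neg_distrib, ← Finset.sum_mul]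
        _ ≤ _ := Finset.sum_le_sum this
    have hpowM : R ^ M = R ^ (M - 1) * R := by rw [← pow_succ]; congr 1; omega
    have hppos : 0 < R ^ (M - 1) := pow_pos hRpos _
    rw [hc0, hpowM]
    nlinarith [mul_pos hppos (sub_pos.mpr hRT)]
  obtain ⟨t, htmem, ht0⟩ := intermediate_value_Ioo hRs hhcont.continuousOn
    (Set.mem_Ioo.mpr ⟨hhs, hhR⟩)
  have hts : s < t := htmem.1
  have htpos : (0:ℝ) < t := lt_trans hspos hts
  refine ⟨-t, ?_, ?_, ?_⟩
  · have hsum : ∑ m ∈ Finset.range (M + 1), β m * (-t) ^ (M - m) = (-1 : ℝ) ^ M * h t := by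
      rw [hh]
      simp only
      rw [Finset.mul_sum]
      apply Finset.sum_congr rfl
      intro m hm
      have hmM : m ≤ M := by
        have := Finset.mem_range.mp hm; omega
      have hsign : ((-1 : ℝ) ^ M * (-1 : ℝ) ^ m) = (-1 : ℝ) ^ (M - m) := by
        rw [← pow_add]
        have : M + m = (M - m) + 2 * m := by omega
        rw [this, pow_add, pow_mul]
        norm_num
      rw [hcdef]
      simp only
      rw [neg_pow, ← hsign]
      ring
    rw [hsum, ht0, mul_zero]
  · exact neg_lt_neg hts
  · rw [abs_neg, abs_of_pos htpos]
    linarith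
end

section
/- Let β₀,...,β_M be real numbers with β₀ > 0, β₁ > β₀, and (-1)^m β_m ≤ 0 with strict inequality for at least one m in {2,...,M}. Then the polynomial σ(r) = Σ_{m=0}^M β_m r^{M-m} has a real root r₀ with r₀ < -β₁/β₀ < -1. -/
open Finset

/-- Let `β₀,...,β_M` be reals with `β₀ > 0`, `β₁ > β₀`, `(-1)^m β_m ≤ 0` for
`2 ≤ m ≤ M`, strict for at least one such `m`. Then `σ(r) = Σ_{m=0}^M β_m r^{M-m}`
has a real root `r₀ < -β₁/β₀ < -1`. -/
theorem sigma_root_beyond_ratio (M : ℕ) (hM : 2 ≤ M) (β : ℕ → ℝ)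
    (h0 : 0 < β 0) (h10 : β 0 < β 1)
    (hsign : ∀ m, 2 ≤ m → m ≤ M → (-1 : ℝ) ^ m * β m ≤ 0)
    (hstrict : ∃ m, 2 ≤ m ∧ m ≤ M ∧ (-1 : ℝ) ^ m * β m < 0) :
    ∃ r₀ : ℝ, (∑ m ∈ Finset.range (M + 1), β m * r₀ ^ (M - m)) = 0 ∧
      r₀ < -(β 1 / β 0) ∧ -(β 1 / β 0) < -1 := by
  set c : ℝ := β 1 / β 0 with hc
  have hc1 : 1 < c := (one_lt_div h0).2 h10
  have hcpos : 0 < c := lt_trans one_pos hc1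
  set g : ℝ → ℝ := fun r => ∑ m ∈ Finset.range (M + 1), (-1 : ℝ) ^ m * β m * r ^ (M - m)
    with hgdef
  have hgcont : Continuous g := by
    apply continuous_finset_sum
    intro m _
    fun_prop
  have hM1 : M - 1 + 1 = M := by omega
  -- split the sum at 2
  have hsplit : ∀ r : ℝ, g r = (β 0 * r ^ M + (-1) * β 1 * r ^ (M - 1)) +
      ∑ m ∈ Finset.Ico 2 (M + 1), (-1 : ℝ) ^ m * β m * r ^ (M - m) := by
    intro r
    have h02 : (0 : ℕ) ≤ 2 := by omega
    have h2M : 2 ≤ M + 1 := by omega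
    have hcons := Finset.sum_Ico_consecutive
      (fun m => (-1 : ℝ) ^ m * β m * r ^ (M - m)) h02 h2M
    rw [hgdef]
    simp only [Finset.range_eq_Ico]
    rw [← hcons]
    have h01 : ∑ m ∈ Finset.Ico 0 2, (-1 : ℝ) ^ m * β m * r ^ (M - m)
        = β 0 * r ^ M + (-1) * β 1 * r ^ (M - 1) := by
      rw [show Finset.Ico 0 2 = {0, 1} by decide]
      rw [Finset.sum_insert (by decide), Finset.sum_singleton]
      norm_num
    rw [h01]
  -- split the sum at 1
  have hsplit1 : ∀ r : ℝ, g r = β 0 * r ^ M +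
      ∑ m ∈ Finset.Ico 1 (M + 1), (-1 : ℝ) ^ m * β m * r ^ (M - m) := by
    intro r
    have hcons := Finset.sum_Ico_consecutive
      (fun m => (-1 : ℝ) ^ m * β m * r ^ (M - m)) (by omega : (0:ℕ) ≤ 1)
      (by omega : 1 ≤ M + 1)
    rw [hgdef]
    simp only [Finset.range_eq_Ico]
    rw [← hcons]
    have h00 : ∑ m ∈ Finset.Ico 0 1, (-1 : ℝ) ^ m * β m * r ^ (M - m)
        = β 0 * r ^ M := by
      rw [show Finset.Ico 0 1 = {0} by decide, Finset.sum_singleton]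
      norm_num
    rw [h00]
  -- g c < 0
  have hgc : g c < 0 := by
    rw [hsplit c]
    have hcM : c ^ M = c ^ (M - 1) * c := by rw [← pow_succ, hM1]
    have hβc : β 0 * c = β 1 := by rw [hc]; field_simp
    have hfirst : β 0 * c ^ M + (-1) * β 1 * c ^ (M - 1) = 0 := by
      rw [hcM]
      linear_combination c ^ (M - 1) * hβc
    rw [hfirst, zero_add]
    have hlt : ∑ m ∈ Finset.Ico 2 (M + 1), (-1 : ℝ) ^ m * β m * c ^ (M - m)
        < ∑ m ∈ Finset.Ico 2 (M + 1), (0 : ℝ) := by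
      obtain ⟨m₀, hm₀2, hm₀M, hm₀⟩ := hstrict
      apply Finset.sum_lt_sum
      · intro i hi
        rw [Finset.mem_Ico] at hi
        have h1 := hsign i hi.1 (by omega)
        have h2 : (0 : ℝ) < c ^ (M - i) := pow_pos hcpos _
        nlinarith
      · exact ⟨m₀, Finset.mem_Ico.2 ⟨hm₀2, by omega⟩,
          mul_neg_of_neg_of_pos hm₀ (pow_pos hcpos _)⟩
    simpa using hlt
  -- large R
  set C : ℝ := ∑ m ∈ Finset.range (M + 1), |β m| with hCdef
  have hCnn : 0 ≤ C := Finset.sum_nonneg fun m _ => abs_nonneg _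
  set R : ℝ := max (max 1 c) ((C + 1) / β 0) with hRdef
  have hR1 : (1 : ℝ) ≤ R := le_trans (le_max_left 1 c) (le_max_left _ _)
  have hRc : c ≤ R := le_trans (le_max_right 1 c) (le_max_left _ _)
  have hRpos : (0 : ℝ) < R := lt_of_lt_of_le one_pos hR1
  have hRC : C + 1 ≤ β 0 * R := by
    have h := le_max_right (max 1 c) ((C + 1) / β 0)
    rw [div_le_iff₀ h0] at h
    linarith
  have hgR : 0 < g R := by
    rw [hsplit1 R]
    have hbound : ∀ m ∈ Finset.Ico 1 (M + 1),
        -( |β m| * R ^ (M - 1)) ≤ (-1 : ℝ) ^ m * β m * R ^ (M - m) := by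
      intro m hm
      rw [Finset.mem_Ico] at hm
      have habs : |(-1 : ℝ) ^ m * β m * R ^ (M - m)| ≤ |β m| * R ^ (M - 1) := by
        rw [abs_mul, abs_mul, abs_pow, abs_neg, abs_one, one_pow, one_mul,
          abs_pow, abs_of_pos hRpos]
        apply mul_le_mul_of_nonneg_left _ (abs_nonneg _)
        exact pow_le_pow_right₀ hR1 (by omega)
      have h := neg_abs_le ((-1 : ℝ) ^ m * β m * R ^ (M - m))
      linarith
    have hsum : -(∑ m ∈ Finset.Ico 1 (M + 1), |β m| * R ^ (M - 1))
        ≤ ∑ m ∈ Finset.Ico 1 (M + 1), (-1 : ℝ) ^ m * β m * R ^ (M - m) := by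
      rw [← Finset.sum_neg_distrib]
      exact Finset.sum_le_sum hbound
    have hCsub : ∑ m ∈ Finset.Ico 1 (M + 1), |β m| ≤ C := by
      rw [hCdef, Finset.range_eq_Ico]
      apply Finset.sum_le_sum_of_subset_of_nonneg
      · apply Finset.Ico_subset_Ico <;> omega
      · intro i _ _; exact abs_nonneg _
    have hsum2 : ∑ m ∈ Finset.Ico 1 (M + 1), |β m| * R ^ (M - 1)
        ≤ C * R ^ (M - 1) := by
      rw [← Finset.sum_mul]
      exact mul_le_mul_of_nonneg_right hCsub (pow_nonneg hRpos.le _)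
    have hRM : R ^ M = R ^ (M - 1) * R := by rw [← pow_succ, hM1]
    have hRpow : (0 : ℝ) < R ^ (M - 1) := pow_pos hRpos _
    nlinarith [mul_le_mul_of_nonneg_right hRC hRpow.le, hsum, hsum2]
  -- IVT
  have hIVT := intermediate_value_Icc hRc hgcont.continuousOn
  have h0mem : (0 : ℝ) ∈ Set.Icc (g c) (g R) := ⟨hgc.le, hgR.le⟩
  obtain ⟨r, hrmem, hgr⟩ := hIVT h0mem
  refine ⟨-r, ?_, ?_, neg_lt_neg hc1⟩
  · have hterm : ∀ m ∈ Finset.range (M + 1),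
        β m * (-r) ^ (M - m) = (-1 : ℝ) ^ M * ((-1 : ℝ) ^ m * β m * r ^ (M - m)) := by
      intro m hm
      rw [Finset.mem_range] at hm
      have key : (-1 : ℝ) ^ M * (-1 : ℝ) ^ m = (-1 : ℝ) ^ (M - m) * ((-1 : ℝ) ^ m * (-1 : ℝ) ^ m) := by
        rw [← pow_add, ← pow_add, ← pow_add]
        congr 1
        omega
      have hmm : (-1 : ℝ) ^ m * (-1 : ℝ) ^ m = 1 := by
        rw [← pow_add, ← two_mul, pow_mul]
        norm_num
      rw [hmm, mul_one] at key
      rw [neg_pow]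
      rw [← key]; ring
    rw [Finset.sum_congr rfl hterm, ← Finset.mul_sum]
    rw [show (∑ m ∈ Finset.range (M + 1), (-1 : ℝ) ^ m * β m * r ^ (M - m)) = g r from rfl,
      hgr]
    ring
  · have hne : r ≠ c := by
      intro h
      rw [h] at hgr
      exact absurd hgr (ne_of_lt hgc)
    have : c < r := lt_of_le_of_ne hrmem.1 (Ne.symm hne)
    exact neg_lt_neg this
end

section
/- Consider the scalar recurrence e_n = -e_{n-1} + 2τ_n for n = 1,...,N on a uniform grid of [a,b] with h = (b-a)/N, where |e_0| ≤ C₀h² and τ_n = E(t_n)h² + O(h³) for a continuously differentiable function E on [a,b]. Then max_{1≤n≤N} |e_n| = O(h²) as h → 0. -/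
open Finset

/-- Error recurrence for AM-1 dynamics discovery: for the scalar recurrence
`e_n = -e_{n-1} + 2 τ_n` on a uniform grid of `[a,b]` with `h = (b-a)/N`, where
`|e₀| ≤ C₀ h²` and `τ_n = E(t_n) h² + O(h³)` with `E` continuously differentiable
on `[a,b]`, we have `max_{1≤n≤N} |e_n| = O(h²)` as `h → 0`. -/
theorem am1_error_recurrence (a b : ℝ) (hab : a < b) (E : ℝ → ℝ)
    (hE : ContDiffOn ℝ 1 E (Set.Icc a b)) (C₀ C₁ : ℝ) :
    ∃ C : ℝ, ∀ N : ℕ, 1 ≤ N → ∀ e τ : ℕ → ℝ,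
      |e 0| ≤ C₀ * ((b - a) / N) ^ 2 →
      (∀ n, 1 ≤ n → n ≤ N → e n = -e (n - 1) + 2 * τ n) →
      (∀ n, 1 ≤ n → n ≤ N →
        |τ n - E (a + n * ((b - a) / N)) * ((b - a) / N) ^ 2| ≤ C₁ * ((b - a) / N) ^ 3) →
      ∀ n, 1 ≤ n → n ≤ N → |e n| ≤ C * ((b - a) / N) ^ 2 := by
  -- bound M on |E| over [a,b]
  have hcpt : IsCompact (Set.Icc a b) := isCompact_Icc
  obtain ⟨M, hM⟩ := hcpt.exists_bound_of_continuousOn hE.continuousOn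
  -- Lipschitz constant K via bound on derivWithin
  have hud : UniqueDiffOn ℝ (Set.Icc a b) := uniqueDiffOn_Icc hab
  have hderivcont : ContinuousOn (derivWithin E (Set.Icc a b)) (Set.Icc a b) :=
    hE.continuousOn_derivWithin hud le_rfl
  obtain ⟨K, hK⟩ := hcpt.exists_bound_of_continuousOn hderivcont
  have hdiff : DifferentiableOn ℝ E (Set.Icc a b) := hE.differentiableOn one_ne_zero
  have hLip : ∀ x ∈ Set.Icc a b, ∀ y ∈ Set.Icc a b, |E y - E x| ≤ K * |y - x| := by
    intro x hx y hy
    have := (convex_Icc a b).norm_image_sub_le_of_norm_derivWithin_le hdiff hK hx hy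
    simpa [Real.norm_eq_abs] using this
  have hM0 : 0 ≤ M := le_trans (abs_nonneg _) (hM a (Set.left_mem_Icc.2 hab.le))
  refine ⟨C₀ + 2 * M + (2 * C₁ + K) * (b - a), ?_⟩
  intro N hN e τ he0 hrec hτ
  set h : ℝ := (b - a) / N with hh
  have hNpos : (0 : ℝ) < N := by exact_mod_cast hN
  have hpos : 0 < h := div_pos (by linarith) hNpos
  have hNh : (N : ℝ) * h = b - a := by rw [hh]; field_simp [hNpos.ne']
  -- grid points lie in [a,b]
  have hmem : ∀ n : ℕ, n ≤ N → a + n * h ∈ Set.Icc a b := by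
    intro n hn
    constructor
    · nlinarith [Nat.cast_nonneg (α := ℝ) n]
    · have : (n : ℝ) * h ≤ (N : ℝ) * h := by
        apply mul_le_mul_of_nonneg_right _ hpos.le
        exact_mod_cast hn
      linarith [hNh ▸ this]
  -- main induction on s n := e n - E (t n) h²
  have key : ∀ n : ℕ, n ≤ N →
      |e n - E (a + n * h) * h ^ 2| ≤ |e 0 - E (a + 0 * h) * h ^ 2|
        + n * ((2 * C₁ + K) * h ^ 3) := by
    intro n
    induction n with
    | zero => intro _; simp
    | succ m ih =>
      intro hm
      have hm' : m ≤ N := Nat.le_of_succ_le hm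
      have ihm := ih hm'
      have hrec' := hrec (m + 1) (Nat.le_add_left 1 m) hm
      have hτ' := hτ (m + 1) (Nat.le_add_left 1 m) hm
      have hlip := hLip (a + m * h) (hmem m hm') (a + ((m+1 : ℕ) : ℝ) * h) (hmem (m+1) hm)
      have hdist : |(a + ((m+1 : ℕ) : ℝ) * h) - (a + m * h)| = h := by
        push_cast
        rw [show (a + ((m:ℝ)+1) * h) - (a + (m:ℝ) * h) = h by ring, abs_of_pos hpos]
      have hEdiff : |E (a + ((m+1 : ℕ) : ℝ) * h) - E (a + m * h)| ≤ K * h := by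
        rw [hdist] at hlip; exact hlip
      have hsimp : m + 1 - 1 = m := rfl
      rw [hsimp] at hrec'
      have heq : e (m+1) - E (a + ((m+1 : ℕ) : ℝ) * h) * h ^ 2
          = -(e m - E (a + m * h) * h ^ 2)
            + 2 * (τ (m+1) - E (a + ((m+1 : ℕ) : ℝ) * h) * h ^ 2)
            + (E (a + ((m+1 : ℕ) : ℝ) * h) - E (a + m * h)) * h ^ 2 := by
        rw [hrec']; ring
      calc |e (m+1) - E (a + ((m+1 : ℕ) : ℝ) * h) * h ^ 2|
          ≤ |e m - E (a + m * h) * h ^ 2| + 2 * (C₁ * h ^ 3) + (K * h) * h ^ 2 := by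
            rw [heq]
            refine (abs_add_le _ _).trans (add_le_add ((abs_add_le _ _).trans (add_le_add ?_ ?_)) ?_)
            · exact le_of_eq (abs_neg _)
            · rw [abs_mul, abs_two]
              exact mul_le_mul_of_nonneg_left hτ' (by norm_num)
            · rw [abs_mul, abs_of_nonneg (sq_nonneg h)]
              exact mul_le_mul_of_nonneg_right hEdiff (sq_nonneg h)
        _ ≤ (|e 0 - E (a + 0 * h) * h ^ 2| + m * ((2 * C₁ + K) * h ^ 3))
              + 2 * (C₁ * h ^ 3) + (K * h) * h ^ 2 := by gcongr
        _ = |e 0 - E (a + 0 * h) * h ^ 2| + (((m+1 : ℕ)) : ℝ) * ((2 * C₁ + K) * h ^ 3) := by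
            push_cast; ring
  intro n hn1 hnN
  have hkey := key n hnN
  have hs0 : |e 0 - E (a + 0 * h) * h ^ 2| ≤ (C₀ + M) * h ^ 2 := by
    refine le_trans (abs_sub _ _) ?_
    have hEa : |E (a + 0 * h)| ≤ M := by simpa using hM a (Set.left_mem_Icc.2 hab.le)
    have : |E (a + 0 * h) * h ^ 2| ≤ M * h ^ 2 := by
      rw [abs_mul, abs_of_nonneg (sq_nonneg h)]
      exact mul_le_mul_of_nonneg_right hEa (sq_nonneg h)
    linarith [he0]
  have hEn : |E (a + n * h)| ≤ M := hM _ (hmem n hnN)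
  have hnh3 : (n : ℝ) * ((2 * C₁ + K) * h ^ 3) ≤ (2 * C₁ + K) * (b - a) * h ^ 2 := by
    have hC1 : 0 ≤ C₁ * h ^ 3 := le_trans (abs_nonneg _) (hτ n hn1 hnN)
    have hK0 : 0 ≤ K := le_trans (abs_nonneg _) (hK a (Set.left_mem_Icc.2 hab.le))
    have hcast : (n : ℝ) ≤ N := by exact_mod_cast hnN
    have h1 : (n : ℝ) * ((2 * C₁ + K) * h ^ 3) ≤ (N : ℝ) * ((2 * C₁ + K) * h ^ 3) := by
      apply mul_le_mul_of_nonneg_right hcast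
      have : 0 ≤ 2 * C₁ + K := by nlinarith [pow_pos hpos 3]
      positivity
    have h2 : (N : ℝ) * ((2 * C₁ + K) * h ^ 3) = (2 * C₁ + K) * (b - a) * h ^ 2 := by
      rw [← hNh]; ring
    linarith
  calc |e n| ≤ |e n - E (a + n * h) * h ^ 2| + |E (a + n * h) * h ^ 2| := by
        have := abs_add_le (e n - E (a + n * h) * h ^ 2) (E (a + n * h) * h ^ 2)
        simpa using this
    _ ≤ ((C₀ + M) * h ^ 2 + (2 * C₁ + K) * (b - a) * h ^ 2) + M * h ^ 2 := by
        have : |E (a + n * h) * h ^ 2| ≤ M * h ^ 2 := by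
          rw [abs_mul, abs_of_nonneg (sq_nonneg h)]
          exact mul_le_mul_of_nonneg_right hEn (sq_nonneg h)
        linarith
    _ = (C₀ + 2 * M + (2 * C₁ + K) * (b - a)) * h ^ 2 := by ring
end
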